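/- Let m ∈ (0,1). If y ≥ −m then for any λ ∈ [0, 1/m), log(1 + λy) ≥ λy + (y²/m²)(log(1 − mλ) + mλ). If y ≤ 1 − m then for any λ ∈ (−1/(1−m), 0], log(1 + λy) ≥ λy + (y²/(1−m)²)(log(1 + (1−m)λ) − (1−m)λ). -/

import Mathlib

open Real

private lemma log_hd {x : ℝ} (hx : -1 < x) :
    HasDerivAt (fun t => Real.log (1+t)) (1/(1+x)) x := by
  have h1 : (1:ℝ) + x ≠ 0 := by linarith
  have hadd : HasDerivAt (fun t : ℝ => 1 + t) 1 x := by
    simpa using (hasDerivAt_id x).const_add (1:ℝ)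
  simpa [Function.comp_def] using (Real.hasDerivAt_log h1).comp x hadd

private lemma g_hd {x : ℝ} (hx : -1 < x) :
    HasDerivAt (fun t : ℝ => 2*t - 2*Real.log (1+t) - t^2/(1+t)) (x^2/(1+x)^2) x := by
  have h1 : (1:ℝ) + x ≠ 0 := by linarith
  have hadd : HasDerivAt (fun t : ℝ => 1 + t) 1 x := by
    simpa using (hasDerivAt_id x).const_add (1:ℝ)
  have hdiv : HasDerivAt (fun t : ℝ => t^2/(1+t))
      (((2:ℕ) * x ^ (2-1) * (1+x) - x^2 * 1)/(1+x)^2) x :=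
    (hasDerivAt_pow 2 x).div hadd h1
  have := (((hasDerivAt_id x).const_mul (2:ℝ)).sub ((log_hd hx).const_mul (2:ℝ))).sub hdiv
  refine this.congr_deriv ?_
  field_simp
  ring

private lemma g_mono : MonotoneOn (fun t : ℝ => 2*t - 2*Real.log (1+t) - t^2/(1+t))
    (Set.Ioi (-1 : ℝ)) := by
  apply monotoneOn_of_hasDerivWithinAt_nonneg (convex_Ioi _)
    (f' := fun t => t^2/(1+t)^2)
  · intro x hx
    exact (g_hd hx).continuousAt.continuousWithinAt
  · intro x hx
    rw [interior_Ioi] at hx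
    exact (g_hd hx).hasDerivWithinAt
  · intro x _
    positivity

private lemma g_nonneg {x : ℝ} (hx : 0 ≤ x) :
    x^2/(1+x) ≤ 2*x - 2*Real.log (1+x) := by
  have h := g_mono (by norm_num : (0:ℝ) ∈ Set.Ioi (-1:ℝ))
    (by simp only [Set.mem_Ioi]; linarith : x ∈ Set.Ioi (-1:ℝ)) hx
  simp only [Real.log_one, mul_zero, add_zero] at h
  norm_num at h
  linarith

private lemma g_nonpos {x : ℝ} (hx1 : -1 < x) (hx : x ≤ 0) :
    2*x - 2*Real.log (1+x) ≤ x^2/(1+x) := by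
  have h := g_mono (Set.mem_Ioi.2 hx1) (by norm_num : (0:ℝ) ∈ Set.Ioi (-1:ℝ)) hx
  norm_num at h
  linarith

private lemma h_hd {x : ℝ} (hx : -1 < x) :
    HasDerivAt (fun t : ℝ => Real.log (1+t) - t + t^2/2) (x^2/(1+x)) x := by
  have h1 : (1:ℝ) + x ≠ 0 := by linarith
  have := ((log_hd hx).sub (hasDerivAt_id x)).add ((hasDerivAt_pow 2 x).div_const 2)
  refine this.congr_deriv ?_
  field_simp
  ring

private lemma h_mono : MonotoneOn (fun t : ℝ => Real.log (1+t) - t + t^2/2)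
    (Set.Ioi (-1 : ℝ)) := by
  apply monotoneOn_of_hasDerivWithinAt_nonneg (convex_Ioi _)
    (f' := fun t => t^2/(1+t))
  · intro x hx
    exact (h_hd hx).continuousAt.continuousWithinAt
  · intro x hx
    rw [interior_Ioi] at hx
    exact (h_hd hx).hasDerivWithinAt
  · intro x hx
    rw [interior_Ioi] at hx
    have : (0:ℝ) < 1 + x := by simp only [Set.mem_Ioi] at hx; linarith
    positivity

private lemma h_nonneg {x : ℝ} (hx : 0 ≤ x) :
    -(x^2/2) ≤ Real.log (1+x) - x := by
  have h := h_mono (by norm_num : (0:ℝ) ∈ Set.Ioi (-1:ℝ))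
    (by simp only [Set.mem_Ioi]; linarith : x ∈ Set.Ioi (-1:ℝ)) hx
  norm_num at h
  linarith

private lemma h_nonpos {x : ℝ} (hx1 : -1 < x) (hx : x ≤ 0) :
    Real.log (1+x) - x ≤ -(x^2/2) := by
  have h := h_mono (Set.mem_Ioi.2 hx1) (by norm_num : (0:ℝ) ∈ Set.Ioi (-1:ℝ)) hx
  norm_num at h
  linarith

private lemma fan_key {a b : ℝ} (hb : -1 < b) (hba : b ≤ a) :
    a^2 * (Real.log (1+b) - b) ≤ b^2 * (Real.log (1+a) - a) := by
  have ha : -1 < a := lt_of_lt_of_le hb hba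
  rcases le_or_gt 0 b with hb0 | hb0
  · -- 0 ≤ b ≤ a
    set C := Real.log (1+b) - b with hC
    have hd : ∀ x : ℝ, -1 < x → HasDerivAt (fun t => b^2*(Real.log (1+t) - t) - t^2*C)
        (b^2*(1/(1+x) - 1) - (2:ℕ)*x^(2-1)*C) x := by
      intro x hx
      exact (((log_hd hx).sub (hasDerivAt_id x)).const_mul (b^2)).sub
        ((hasDerivAt_pow 2 x).mul_const C)
    have hC0 : C ≤ 0 := by
      rw [hC]
      have := Real.log_le_sub_one_of_pos (show (0:ℝ) < 1 + b by linarith)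
      linarith
    have hmono : MonotoneOn (fun t => b^2*(Real.log (1+t) - t) - t^2*C) (Set.Icc b a) := by
      apply monotoneOn_of_hasDerivWithinAt_nonneg (convex_Icc _ _)
        (f' := fun x => b^2*(1/(1+x) - 1) - (2:ℕ)*x^(2-1)*C)
      · intro x hx
        exact (hd x (lt_of_lt_of_le hb hx.1)).continuousAt.continuousWithinAt
      · intro x hx
        rw [interior_Icc] at hx
        exact (hd x (lt_of_lt_of_le hb (le_of_lt hx.1))).hasDerivWithinAt
      · intro x hx
        rw [interior_Icc] at hx
        have hxb : b < x := hx.1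
        have hx0 : 0 ≤ x := le_trans hb0 (le_of_lt hxb)
        have h1b : (0:ℝ) < 1 + b := by linarith
        have h1x : (0:ℝ) < 1 + x := by linarith
        have hg := g_nonneg hb0
        have hg' : b^2 ≤ (2*b - 2*Real.log (1+b)) * (1+b) := by
          rw [div_le_iff₀ h1b] at hg; linarith
        have h2C : b^2 ≤ (-2*C)*(1+b) := by rw [hC]; nlinarith [hg']
        have h3 : x*b^2 ≤ x*((-2*C)*(1+b)) := mul_le_mul_of_nonneg_left h2C hx0
        have e1 : b^2*(1/(1+x) - 1) - (2:ℕ)*x^(2-1)*C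
            = (-(b^2*x) - 2*x*C*(1+x))/(1+x) := by
          field_simp
          ring
        rw [e1, le_div_iff₀ h1x]
        nlinarith [h3, mul_nonneg (mul_nonneg hx0 (by linarith : (0:ℝ) ≤ -2*C))
          (by linarith : (0:ℝ) ≤ x - b)]
    have hφ := hmono (Set.mem_Icc.2 ⟨le_refl b, hba⟩) (Set.mem_Icc.2 ⟨hba, le_refl a⟩) hba
    simp only at hφ
    rw [← hC] at hφ
    nlinarith [hφ]
  · rcases le_or_gt a 0 with ha0 | ha0
    · -- b < 0, a ≤ 0
      set L := Real.log (1+a) - a with hL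
      have hd : ∀ x : ℝ, -1 < x → HasDerivAt (fun t => t^2*L - a^2*(Real.log (1+t) - t))
          ((2:ℕ)*x^(2-1)*L - a^2*(1/(1+x) - 1)) x := by
        intro x hx
        exact ((hasDerivAt_pow 2 x).mul_const L).sub
          (((log_hd hx).sub (hasDerivAt_id x)).const_mul (a^2))
      have hL0 : L ≤ 0 := by
        rw [hL]
        have := Real.log_le_sub_one_of_pos (show (0:ℝ) < 1 + a by linarith)
        linarith
      have hanti : AntitoneOn (fun t => t^2*L - a^2*(Real.log (1+t) - t)) (Set.Icc b a) := by
        apply antitoneOn_of_hasDerivWithinAt_nonpos (convex_Icc _ _)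
          (f' := fun x => (2:ℕ)*x^(2-1)*L - a^2*(1/(1+x) - 1))
        · intro x hx
          exact (hd x (lt_of_lt_of_le hb hx.1)).continuousAt.continuousWithinAt
        · intro x hx
          rw [interior_Icc] at hx
          exact (hd x (lt_of_lt_of_le hb (le_of_lt hx.1))).hasDerivWithinAt
        · intro x hx
          rw [interior_Icc] at hx
          have hxb : b < x := hx.1
          have hxa : x < a := hx.2
          have hx0 : x ≤ 0 := le_of_lt (lt_of_lt_of_le hxa ha0)
          have h1x : (0:ℝ) < 1 + x := by linarith
          have h1a : (0:ℝ) < 1 + a := by linarith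
          have hg := g_nonpos ha ha0
          have hga : (2*a - 2*Real.log (1+a)) * (1+a) ≤ a^2 := by
            rw [← le_div_iff₀ h1a]; exact hg
          have hga' : -2*L*(1+a) ≤ a^2 := by rw [hL]; nlinarith [hga]
          have hbr : 0 ≤ 2*L*(1+x) + a^2 := by
            nlinarith [mul_nonneg (by linarith : (0:ℝ) ≤ -(2*L)) (by linarith : (0:ℝ) ≤ a - x)]
          have e1 : (2:ℕ)*x^(2-1)*L - a^2*(1/(1+x) - 1)
              = (2*x*L*(1+x) + a^2*x)/(1+x) := by
            field_simp
            ring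
          rw [e1]
          apply div_nonpos_of_nonpos_of_nonneg _ (le_of_lt h1x)
          nlinarith [mul_nonneg (by linarith : (0:ℝ) ≤ -x) hbr]
      have hψ := hanti (Set.mem_Icc.2 ⟨le_refl b, hba⟩) (Set.mem_Icc.2 ⟨hba, le_refl a⟩) hba
      simp only at hψ
      rw [← hL] at hψ
      nlinarith [hψ]
    · -- b < 0 < a : mixed
      have h1 := h_nonpos hb (le_of_lt hb0)
      have h2 := h_nonneg (le_of_lt ha0)
      nlinarith [mul_le_mul_of_nonneg_left h1 (sq_nonneg a),
        mul_le_mul_of_nonneg_left h2 (sq_nonneg b)]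

/-- Extension of Fan's inequality to the full betting range (Lemma: extendedFan). -/
theorem extended_fan (m : ℝ) (hm : m ∈ Set.Ioo (0 : ℝ) 1) :
    (∀ y : ℝ, -m ≤ y → ∀ lam : ℝ, lam ∈ Set.Ico (0 : ℝ) (1 / m) →
      lam * y + (y ^ 2 / m ^ 2) * (Real.log (1 - m * lam) + m * lam)
        ≤ Real.log (1 + lam * y)) ∧
    (∀ y : ℝ, y ≤ 1 - m → ∀ lam : ℝ, lam ∈ Set.Ioc (-(1 / (1 - m))) (0 : ℝ) →
      lam * y + (y ^ 2 / (1 - m) ^ 2) * (Real.log (1 + (1 - m) * lam) - (1 - m) * lam)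
        ≤ Real.log (1 + lam * y)) := by
  obtain ⟨hm0, hm1⟩ := hm
  constructor
  · rintro y hy lam ⟨hl0, hl1⟩
    rcases eq_or_lt_of_le hl0 with rfl | hl0'
    · norm_num
    · have hmlam : m * lam < 1 := by
        have := (lt_div_iff₀ hm0).1 hl1
        linarith [this]
      have hb : (-1:ℝ) < -(m*lam) := by linarith
      have hba : -(m*lam) ≤ lam*y := by
        nlinarith [mul_nonneg hl0 (by linarith : (0:ℝ) ≤ y + m)]
      have K := fan_key hb hba
      rw [show (1:ℝ) + -(m*lam) = 1 - m*lam by ring] at K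
      have hm2 : (0:ℝ) < m^2 := by positivity
      have hlam2 : (0:ℝ) < lam^2 := by positivity
      have h1 : y^2/m^2 * (Real.log (1-m*lam) + m*lam) ≤ Real.log (1+lam*y) - lam*y := by
        rw [div_mul_eq_mul_div, div_le_iff₀ hm2]
        have h2 : lam^2 * (y^2 * (Real.log (1 - m*lam) + m*lam))
            ≤ lam^2 * ((Real.log (1+lam*y) - lam*y) * m^2) := by linear_combination K
        exact le_of_mul_le_mul_left h2 hlam2
      linarith
  · rintro y hy lam ⟨hl1, hl0⟩
    have hc : (0:ℝ) < 1 - m := by linarith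
    rcases eq_or_lt_of_le hl0 with rfl | hl0'
    · norm_num
    · have hb : (-1:ℝ) < (1-m)*lam := by
        have h := mul_lt_mul_of_pos_left hl1 hc
        rw [mul_neg, mul_one_div, div_self (ne_of_gt hc)] at h
        exact h
      have hba : (1-m)*lam ≤ lam*y := by
        nlinarith [mul_nonneg (by linarith : (0:ℝ) ≤ -lam) (by linarith : (0:ℝ) ≤ (1-m) - y)]
      have K := fan_key hb hba
      have hc2 : (0:ℝ) < (1-m)^2 := by positivity
      have hlam2 : (0:ℝ) < lam^2 := by nlinarith
      have h1 : y^2/(1-m)^2 * (Real.log (1+(1-m)*lam) - (1-m)*lam)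
          ≤ Real.log (1+lam*y) - lam*y := by
        rw [div_mul_eq_mul_div, div_le_iff₀ hc2]
        have h2 : lam^2 * (y^2 * (Real.log (1+(1-m)*lam) - (1-m)*lam))
            ≤ lam^2 * ((Real.log (1+lam*y) - lam*y) * (1-m)^2) := by linear_combination K
        exact le_of_mul_le_mul_left h2 hlam2
      linarith
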